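/- Let K be a separably closed field admitting a nontrivial automorphism of finite order with fixed field F such that [K : F] is finite and > 1. Then char(K) = 0, F is real closed, K = F(i) with i² = -1, and [K : F] = 2. -/

import Mathlib

open Finset Polynomial

namespace ArtinSchreierAux

variable {K : Type*} [Field K]

lemma shift_sum {M : Type*} [AddCommMonoid M] {q : ℕ} {f : ℕ → M} (hf : f q = f 0) :
    ∑ k ∈ range q, f (k + 1) = ∑ k ∈ range q, f k := by
  cases q with
  | zero => simp
  | succ m => rw [Finset.sum_range_succ, hf, Finset.sum_range_succ']

lemma shift_prod {M : Type*} [CommMonoid M] {q : ℕ} {f : ℕ → M} (hf : f q = f 0) :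
    ∏ k ∈ range q, f (k + 1) = ∏ k ∈ range q, f k := by
  cases q with
  | zero => simp
  | succ m => rw [Finset.prod_range_succ, hf, Finset.prod_range_succ']

lemma pow_apply_succ (τ : K ≃+* K) (k : ℕ) (x : K) : (τ ^ (k + 1)) x = τ ((τ ^ k) x) := by
  rw [pow_succ']; rfl

lemma pow_apply_succ' (τ : K ≃+* K) (k : ℕ) (x : K) : (τ ^ (k + 1)) x = (τ ^ k) (τ x) := by
  rw [pow_succ]; rfl

lemma fixed_pow (τ : K ≃+* K) {x : K} (hx : τ x = x) : ∀ k : ℕ, (τ ^ k) x = x := by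
  intro k
  induction k with
  | zero => rfl
  | succ m ih => rw [pow_apply_succ, ih, hx]

lemma tau_pow_ord (τ : K ≃+* K) {q : ℕ} (hord : orderOf τ = q) (x : K) : (τ ^ q) x = x := by
  rw [← hord, pow_orderOf_eq_one]; rfl

/-- Dedekind's linear independence of characters, in the concrete form we need. -/
lemma exists_sum_ne_zero (τ : K ≃+* K) {q : ℕ} (hord : orderOf τ = q)
    (y : ℕ → K) {k0 : ℕ} (hk0 : k0 < q) (hy : y k0 ≠ 0) :
    ∃ c : K, ∑ k ∈ range q, y k * (τ ^ k) c ≠ 0 := by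
  by_contra hc
  push_neg at hc
  have hinj : Function.Injective fun k : Fin q => ((τ ^ (k : ℕ)).toMonoidHom : K →* K) := by
    intro j l h
    have hfe : τ ^ (j : ℕ) = τ ^ (l : ℕ) := by
      ext x
      exact DFunLike.congr_fun h x
    have hj : (j : ℕ) ∈ Set.Iio (orderOf τ) := by rw [hord]; exact j.2
    have hl : (l : ℕ) ∈ Set.Iio (orderOf τ) := by rw [hord]; exact l.2
    exact Fin.ext (pow_injOn_Iio_orderOf hj hl hfe)
  have li := (linearIndependent_monoidHom K K).comp _ hinj
  rw [Fintype.linearIndependent_iff] at li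
  have hz := li (fun k : Fin q => y (k : ℕ)) ?_ ⟨k0, hk0⟩
  · exact hy hz
  · funext x
    show (∑ i : Fin q, y (i : ℕ) • (((τ ^ (i : ℕ)).toMonoidHom : K →* K) : K → K)) x = 0
    rw [Finset.sum_apply]
    show ∑ i : Fin q, y (i : ℕ) * (τ ^ (i : ℕ)) x = 0
    rw [Fin.sum_univ_eq_sum_range (fun k => y k * (τ ^ k) x) q]
    exact hc x

/-- there is an element of trace 1 -/
lemma exists_trace_one (τ : K ≃+* K) {q : ℕ} (hord : orderOf τ = q) (hq : 0 < q) :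
    ∃ z : K, ∑ k ∈ range q, (τ ^ k) z = 1 := by
  obtain ⟨c, hc⟩ := exists_sum_ne_zero τ hord (fun _ => 1) hq one_ne_zero
  simp only [one_mul] at hc
  set t := ∑ k ∈ range q, (τ ^ k) c with ht
  have htf : τ t = t := by
    rw [ht, map_sum]
    have h1 : ∀ k ∈ range q, τ ((τ ^ k) c) = (τ ^ (k + 1)) c := fun k _ =>
      (pow_apply_succ τ k c).symm
    rw [Finset.sum_congr rfl h1]
    exact shift_sum (f := fun k => (τ ^ k) c) (tau_pow_ord τ hord c)
  refine ⟨t⁻¹ * c, ?_⟩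
  have h2 : ∀ k ∈ range q, (τ ^ k) (t⁻¹ * c) = t⁻¹ * (τ ^ k) c := by
    intro k _
    rw [map_mul, map_inv₀, fixed_pow τ htf k]
  rw [Finset.sum_congr rfl h2, ← Finset.mul_sum, ← ht, inv_mul_cancel₀ hc]

/-- additive Hilbert 90 for a cyclic group -/
lemma h90_add (τ : K ≃+* K) {q : ℕ} (hord : orderOf τ = q) (hq : 0 < q) (y : K)
    (hy : ∑ k ∈ range q, (τ ^ k) y = 0) : ∃ c : K, y = c - τ c := by
  obtain ⟨z, hz⟩ := exists_trace_one τ hord hq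
  set S : ℕ → K := fun i => ∑ j ∈ range i, (τ ^ j) y with hS
  set c : K := ∑ i ∈ range q, S i * (τ ^ i) z with hc
  have hτS : ∀ i, τ (S i) = S (i + 1) - y := by
    intro i
    have h1 : τ (S i) = ∑ j ∈ range i, (τ ^ (j + 1)) y := by
      rw [hS, map_sum]
      exact Finset.sum_congr rfl fun j _ => (pow_apply_succ τ j y).symm
    have h2 : S (i + 1) = (∑ j ∈ range i, (τ ^ (j + 1)) y) + y := by
      rw [hS]
      simpa using Finset.sum_range_succ' (fun j => (τ ^ j) y) i
    rw [h1, h2]; ring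
  have hτc : τ c = c - y := by
    rw [hc, map_sum]
    have h1 : ∀ i ∈ range q,
        τ (S i * (τ ^ i) z) = S (i + 1) * (τ ^ (i + 1)) z - y * (τ ^ (i + 1)) z := by
      intro i _
      rw [map_mul, hτS i, ← pow_apply_succ τ i z]; ring
    rw [Finset.sum_congr rfl h1, Finset.sum_sub_distrib]
    have h2 : ∑ i ∈ range q, S (i + 1) * (τ ^ (i + 1)) z = ∑ i ∈ range q, S i * (τ ^ i) z := by
      refine shift_sum (f := fun i => S i * (τ ^ i) z) ?_
      have hSq : S q = 0 := hy
      have hS0 : S 0 = 0 := by simp [hS]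
      show S q * (τ ^ q) z = S 0 * (τ ^ 0) z
      rw [hSq, hS0, zero_mul, zero_mul]
    have h3 : ∑ i ∈ range q, y * (τ ^ (i + 1)) z = y := by
      rw [← Finset.mul_sum]
      have h4 : ∑ i ∈ range q, (τ ^ (i + 1)) z = ∑ i ∈ range q, (τ ^ i) z :=
        shift_sum (f := fun i => (τ ^ i) z) (tau_pow_ord τ hord z)
      rw [h4, hz, mul_one]
    rw [h2, h3]
  exact ⟨c, by rw [hτc]; ring⟩

/-- multiplicative Hilbert 90 for a cyclic group -/
lemma h90_mul (τ : K ≃+* K) {q : ℕ} (hord : orderOf τ = q) (hq : 0 < q) (y : K) (hy0 : y ≠ 0)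
    (hy : ∏ k ∈ range q, (τ ^ k) y = 1) : ∃ b : K, b ≠ 0 ∧ y * τ b = b := by
  set Y : ℕ → K := fun k => ∏ j ∈ range k, (τ ^ j) y with hY
  have hY0 : ∀ k, Y k ≠ 0 := by
    intro k
    refine Finset.prod_ne_zero_iff.mpr fun j _ => ?_
    exact (map_ne_zero (τ ^ j)).mpr hy0
  obtain ⟨c, hc⟩ := exists_sum_ne_zero τ hord Y hq (hY0 0)
  set b : K := ∑ k ∈ range q, Y k * (τ ^ k) c with hb
  refine ⟨b, hc, ?_⟩
  have key : ∀ k, y * τ (Y k * (τ ^ k) c) = Y (k + 1) * (τ ^ (k + 1)) c := by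
    intro k
    have h1 : τ (Y k) = ∏ j ∈ range k, (τ ^ (j + 1)) y := by
      rw [hY, map_prod]
      exact Finset.prod_congr rfl fun j _ => (pow_apply_succ τ j y).symm
    have h2 : Y (k + 1) = (∏ j ∈ range k, (τ ^ (j + 1)) y) * y := by
      rw [hY]
      simpa using Finset.prod_range_succ' (fun j => (τ ^ j) y) k
    rw [map_mul, h1, ← pow_apply_succ τ k c, h2]; ring
  calc y * τ b = ∑ k ∈ range q, y * τ (Y k * (τ ^ k) c) := by
        rw [hb, map_sum, Finset.mul_sum]
    _ = ∑ k ∈ range q, Y (k + 1) * (τ ^ (k + 1)) c :=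
        Finset.sum_congr rfl fun k _ => key k
    _ = b := by
        rw [hb]
        refine shift_sum (f := fun k => Y k * (τ ^ k) c) ?_
        have hYq : Y q = 1 := hy
        have hY0' : Y 0 = 1 := by simp [hY]
        show Y q * (τ ^ q) c = Y 0 * (τ ^ 0) c
        rw [hYq, hY0', tau_pow_ord τ hord]
        rfl

/-- The characteristic-p contradiction: there is no automorphism of order `p = char K`
when all Artin–Schreier polynomials split. -/
lemma char_case {p : ℕ} (hp : p.Prime) (hchar : CharP K p) (τ : K ≃+* K)
    (hord : orderOf τ = p)
    (hsurj : ∀ a : K, ∃ x : K, x ^ p - x = a) : False := by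
  haveI : Fact p.Prime := ⟨hp⟩
  haveI := hchar
  obtain ⟨d, hd⟩ := exists_trace_one τ hord hp.pos
  have htr : ∑ k ∈ range p, (τ ^ k) (d ^ p - d) = 0 := by
    have h1 : ∀ k ∈ range p, (τ ^ k) (d ^ p - d) = ((τ ^ k) d) ^ p - (τ ^ k) d := by
      intro k _
      rw [map_sub, map_pow]
    rw [Finset.sum_congr rfl h1, Finset.sum_sub_distrib, ← sum_pow_char, hd, one_pow, sub_self]
  obtain ⟨c, hcy⟩ := h90_add τ hord hp.pos _ htr
  obtain ⟨θ, hθ⟩ := hsurj c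
  set e : K := θ - τ θ - d with he
  have hep : e ^ p = e := by
    have h1 : e ^ p = θ ^ p - (τ θ) ^ p - d ^ p := by
      rw [he, sub_pow_char, sub_pow_char]
    have h2 : e ^ p - e = (θ ^ p - θ) - ((τ θ) ^ p - τ θ) - (d ^ p - d) := by
      rw [h1, he]; ring
    have h3 : (τ θ) ^ p - τ θ = τ c := by rw [← map_pow, ← map_sub, hθ]
    have h4 : e ^ p - e = 0 := by rw [h2, h3, hθ, hcy]; ring
    exact sub_eq_zero.mp h4
  set ν : ZMod p →+* K := ZMod.castHom (dvd_refl p) K with hν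
  have νinj : Function.Injective ν := ν.injective
  have hroot : ∀ a : ZMod p, ((X : K[X]) ^ p - X).IsRoot (ν a) := by
    intro a
    have h5 : (ν a) ^ p = ν a := by rw [← map_pow, ZMod.pow_card]
    simp [Polynomial.IsRoot, h5]
  have hnd : ((X : K[X]) ^ p - X).natDegree = p := by
    rw [Polynomial.natDegree_sub_eq_left_of_natDegree_lt, natDegree_X_pow]
    rw [natDegree_X_pow, natDegree_X]
    exact hp.one_lt
  have hemem : ∃ a : ZMod p, ν a = e := by
    by_contra hno
    push_neg at hno
    classical
    set s : Finset K := insert e (Finset.univ.image ν) with hs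
    have hcard : s.card = p + 1 := by
      rw [hs, Finset.card_insert_of_notMem
        (by simp only [Finset.mem_image]; rintro ⟨a, -, ha⟩; exact hno a ha),
        Finset.card_image_of_injective _ νinj, Finset.card_univ, ZMod.card]
    have hne0 : ((X : K[X]) ^ p - X) ≠ 0 := by
      intro h0
      rw [h0, Polynomial.natDegree_zero] at hnd
      exact hp.ne_zero hnd.symm
    have hsub : s ⊆ ((X : K[X]) ^ p - X).roots.toFinset := by
      intro x hx
      rw [Multiset.mem_toFinset, Polynomial.mem_roots']
      refine ⟨hne0, ?_⟩
      rw [hs] at hx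
      rcases Finset.mem_insert.mp hx with rfl | hx
      · simp [Polynomial.IsRoot, hep]
      · obtain ⟨a, -, rfl⟩ := Finset.mem_image.mp hx
        exact hroot a
    have h1 : p + 1 ≤ p := by
      calc p + 1 = s.card := hcard.symm
        _ ≤ _ := Finset.card_le_card hsub
        _ ≤ Multiset.card ((X : K[X]) ^ p - X).roots := Multiset.toFinset_card_le _
        _ ≤ ((X : K[X]) ^ p - X).natDegree := Polynomial.card_roots' _
        _ = p := hnd
    omega
  obtain ⟨a, ha⟩ := hemem
  have hτe : τ e = e := by
    have h6 : (τ : K →+* K).comp ν = ν := RingHom.ext_zmod _ _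
    have h7 := DFunLike.congr_fun h6 a
    rw [← ha]
    exact h7
  have h0 : ∑ k ∈ range p, (τ ^ k) (θ - τ θ) = 0 := by
    have h1 : ∀ k ∈ range p, (τ ^ k) (θ - τ θ) = (τ ^ k) θ - (τ ^ (k + 1)) θ := by
      intro k _
      rw [map_sub, ← pow_apply_succ' τ k θ]
    rw [Finset.sum_congr rfl h1, Finset.sum_sub_distrib]
    have h2 : ∑ k ∈ range p, (τ ^ (k + 1)) θ = ∑ k ∈ range p, (τ ^ k) θ :=
      shift_sum (f := fun k => (τ ^ k) θ) (tau_pow_ord τ hord θ)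
    rw [h2, sub_self]
  have hde : θ - τ θ = d + e := by rw [he]; ring
  rw [hde] at h0
  have h3 : ∀ k ∈ range p, (τ ^ k) (d + e) = (τ ^ k) d + e := by
    intro k _
    rw [map_add, fixed_pow τ hτe k]
  rw [Finset.sum_congr rfl h3, Finset.sum_add_distrib, hd, Finset.sum_const,
    Finset.card_range, nsmul_eq_mul] at h0
  rw [CharP.cast_eq_zero K p, zero_mul, add_zero] at h0
  exact one_ne_zero h0


lemma pow_root [IsSepClosed K] {q : ℕ} (hq0 : ((q : ℕ) : K) ≠ 0) (a : K) :
    ∃ x : K, x ^ q = a := by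
  haveI : NeZero ((q : ℕ) : K) := ⟨hq0⟩
  exact IsSepClosed.exists_pow_nat_eq a q

lemma exists_primroot [IsSepClosed K] {q : ℕ} (hq : 1 < q) (hq0 : ((q : ℕ) : K) ≠ 0) :
    ∃ ζ : K, IsPrimitiveRoot ζ q := by
  haveI : NeZero ((q : ℕ) : K) := ⟨hq0⟩
  have hsep : (cyclotomic q K).Separable :=
    (Polynomial.X_pow_sub_one_separable_iff.mpr hq0).of_dvd (cyclotomic.dvd_X_pow_sub_one q K)
  have hdeg : (cyclotomic q K).degree ≠ 0 := by
    rw [degree_cyclotomic]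
    simp only [ne_eq, Nat.cast_eq_zero]
    have ht : 0 < q.totient := Nat.totient_pos.mpr (by omega)
    omega
  obtain ⟨ζ, hζ⟩ := IsSepClosed.exists_root _ hdeg hsep
  exact ⟨ζ, (Polynomial.isRoot_cyclotomic_iff).mp hζ⟩

lemma primroot_fixed (τ : K ≃+* K) {q : ℕ} (hq : q.Prime) (hord : orderOf τ = q)
    {ζ : K} (hζ : IsPrimitiveRoot ζ q) : τ ζ = ζ := by
  haveI : Fact q.Prime := ⟨hq⟩
  haveI : NeZero q := ⟨hq.ne_zero⟩
  have h1 : (τ ζ) ^ q = 1 := by rw [← map_pow, hζ.pow_eq_one, map_one]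
  obtain ⟨i, hiq, hi⟩ := hζ.eq_pow_of_pow_eq_one h1
  have hk : ∀ k, (τ ^ k) ζ = ζ ^ (i ^ k) := by
    intro k
    induction k with
    | zero => rw [pow_zero, pow_zero, pow_one]; rfl
    | succ m ih =>
        rw [pow_apply_succ, ih, map_pow, ← hi, ← pow_mul, pow_succ, mul_comm (i ^ m) i]
  have h2 : ζ ^ (i ^ q) = ζ := by
    rw [← hk q, tau_pow_ord τ hord]
  have h3 : ζ ^ (i ^ q + (q - 1)) = 1 := by
    rw [pow_add, h2, ← pow_succ', Nat.sub_add_cancel hq.one_le, hζ.pow_eq_one]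
  have h4 : q ∣ i ^ q + (q - 1) := (hζ.pow_eq_one_iff_dvd _).mp h3
  have h5 : ((i ^ q + (q - 1) : ℕ) : ZMod q) = ((0 : ℕ) : ZMod q) :=
    (ZMod.natCast_eq_natCast_iff _ _ _).mpr ((Nat.modEq_zero_iff_dvd).mpr h4)
  have h6 : (i : ZMod q) = 1 := by
    push_cast [Nat.cast_sub hq.one_le] at h5
    rw [ZMod.pow_card, ZMod.natCast_self] at h5
    -- h5 : i + (0 - 1) = 0
    have : (i : ZMod q) - 1 = 0 := by linear_combination h5
    linear_combination this
  have h7 : i = 1 := by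
    have h8 : i ≡ 1 [MOD q] := (ZMod.natCast_eq_natCast_iff i 1 q).mp (by exact_mod_cast h6)
    have h9 := h8
    unfold Nat.ModEq at h9
    rw [Nat.mod_eq_of_lt hiq, Nat.mod_eq_of_lt hq.one_lt] at h9
    exact h9
  rw [← hi, h7, pow_one]

/-- odd primes cannot occur as order of an automorphism of a separably closed field
(away from the characteristic) -/
lemma odd_case [IsSepClosed K] {q : ℕ} (hq : q.Prime) (hq2 : q ≠ 2)
    (hq0 : ((q : ℕ) : K) ≠ 0) (τ : K ≃+* K) (hord : orderOf τ = q) : False := by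
  haveI : NeZero q := ⟨hq.ne_zero⟩
  obtain ⟨ζ, hζ⟩ := exists_primroot hq.one_lt hq0
  have hfix : τ ζ = ζ := primroot_fixed τ hq hord hζ
  have hfixk : ∀ k, (τ ^ k) ζ = ζ := fixed_pow τ hfix
  have hζ0 : ζ ≠ 0 := hζ.ne_zero hq.ne_zero
  -- use ζ⁻¹, also a primitive root, fixed by τ
  set ξ : K := ζ⁻¹ with hξdef
  have hξ : IsPrimitiveRoot ξ q := hζ.inv
  have hξfix : τ ξ = ξ := by rw [hξdef, map_inv₀, hfix]
  have hξfixk : ∀ k, (τ ^ k) ξ = ξ := fixed_pow τ hξfix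
  have hξ0 : ξ ≠ 0 := hξ.ne_zero hq.ne_zero
  have hy : ∏ k ∈ range q, (τ ^ k) ζ = 1 := by
    rw [Finset.prod_congr rfl fun k _ => hfixk k, Finset.prod_const, Finset.card_range,
      hζ.pow_eq_one]
  obtain ⟨b, hb0, hb⟩ := h90_mul τ hord hq.pos ζ hζ0 hy
  -- hb : ζ * τ b = b, so τ b = ξ * b
  have hτb : τ b = ξ * b := by
    calc τ b = ζ⁻¹ * (ζ * τ b) := by rw [← mul_assoc, inv_mul_cancel₀ hζ0, one_mul]
      _ = ξ * b := by rw [hb, hξdef]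
  obtain ⟨β, hβ⟩ := pow_root hq0 b
  have hβ0 : β ≠ 0 := by
    intro h
    rw [h, zero_pow hq.ne_zero] at hβ
    exact hb0 hβ.symm
  set ω : K := τ β * β⁻¹ with hω
  have hω0 : ω ≠ 0 := mul_ne_zero (by simpa using hβ0) (inv_ne_zero hβ0)
  have hωq : ω ^ q = ξ := by
    rw [hω, mul_pow, ← map_pow, hβ, inv_pow, hβ, hτb, mul_assoc, mul_inv_cancel₀ hb0, mul_one]
  have hτωex : ∃ t, t < q ∧ τ ω = ξ ^ t * ω := by
    have h1 : (τ ω * ω⁻¹) ^ q = 1 := by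
      rw [mul_pow, ← map_pow, hωq, inv_pow, hωq, hξfix, mul_inv_cancel₀ hξ0]
    obtain ⟨t, htq, ht⟩ := hξ.eq_pow_of_pow_eq_one h1
    refine ⟨t, htq, ?_⟩
    rw [ht, inv_mul_cancel_right₀ hω0]
  obtain ⟨t, htq, hτω⟩ := hτωex
  have hkω : ∀ k, (τ ^ k) ω = ξ ^ (t * k) * ω := by
    intro k
    induction k with
    | zero => rw [pow_zero, Nat.mul_zero, pow_zero, one_mul]; rfl
    | succ m ih =>
        rw [pow_apply_succ, ih, map_mul, map_pow, hξfix, hτω, ← mul_assoc, ← pow_add,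
          Nat.mul_succ]
  have htele : ∀ m, (τ ^ m) β = (∏ k ∈ range m, (τ ^ k) ω) * β := by
    intro m
    induction m with
    | zero => rw [Finset.range_zero, Finset.prod_empty, one_mul]; rfl
    | succ m ih =>
        rw [pow_apply_succ, ih, map_mul, map_prod]
        have hτβ : τ β = ω * β := by rw [hω, inv_mul_cancel_right₀ hβ0]
        have h2 : ∏ k ∈ range m, τ ((τ ^ k) ω) = ∏ k ∈ range m, (τ ^ (k + 1)) ω :=
          Finset.prod_congr rfl fun k _ => (pow_apply_succ τ k ω).symm
        rw [h2, hτβ, Finset.prod_range_succ']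
        have h3 : (τ ^ 0) ω = ω := rfl
        rw [h3]; ring
  have h1 : (∏ k ∈ range q, (τ ^ k) ω) = 1 := by
    have h2 := htele q
    rw [tau_pow_ord τ hord] at h2
    rcases mul_left_eq_self₀.mp h2.symm with h | h
    · exact h
    · exact absurd h hβ0
  have hcop : Nat.Coprime q 2 :=
    (Nat.Prime.coprime_iff_not_dvd hq).mpr
      (fun hd => hq2 ((Nat.prime_dvd_prime_iff_eq hq Nat.prime_two).mp hd))
  have hdvdS : q ∣ t * ∑ k ∈ range q, k := by
    have h4 : (∑ k ∈ range q, k) * 2 = q * (q - 1) := Finset.sum_range_id_mul_two q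
    have h5 : q ∣ (∑ k ∈ range q, k) * 2 := ⟨q - 1, h4⟩
    exact (hcop.dvd_of_dvd_mul_right h5).mul_left t
  have hxiS : ξ ^ (t * ∑ k ∈ range q, k) = 1 := (hξ.pow_eq_one_iff_dvd _).mpr hdvdS
  have h3 : (∏ k ∈ range q, (τ ^ k) ω) = ξ := by
    calc (∏ k ∈ range q, (τ ^ k) ω) = ∏ k ∈ range q, ξ ^ (t * k) * ω :=
          Finset.prod_congr rfl fun k _ => hkω k
      _ = (∏ k ∈ range q, ξ ^ (t * k)) * ω ^ q := by
          rw [Finset.prod_mul_distrib, Finset.prod_const, Finset.card_range]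
      _ = ξ ^ (∑ k ∈ range q, t * k) * ξ := by rw [Finset.prod_pow_eq_pow_sum, hωq]
      _ = ξ ^ (t * ∑ k ∈ range q, k) * ξ := by rw [← Finset.mul_sum]
      _ = ξ := by rw [hxiS, one_mul]
  have hcon : ξ = 1 := by rw [← h3, h1]
  exact hξ.ne_one hq.one_lt hcon

/-- an automorphism of order 2 of a separably closed field of characteristic ≠ 2
negates a square root of -1 -/
lemma two_case [IsSepClosed K] (h2 : (2 : K) ≠ 0) (τ : K ≃+* K) (hord : orderOf τ = 2) :
    ∃ i : K, i ^ 2 = -1 ∧ τ i = -i := by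
  have h2' : ((2 : ℕ) : K) ≠ 0 := by push_cast; exact h2
  have hy : ∏ k ∈ range 2, (τ ^ k) (-1 : K) = 1 := by
    rw [Finset.prod_range_succ, Finset.prod_range_one]
    simp
  obtain ⟨b, hb0, hb⟩ := h90_mul τ hord (by norm_num) (-1) (by norm_num) hy
  have hτb : τ b = -b := by linear_combination -hb
  obtain ⟨β, hβ⟩ := pow_root h2' b
  have hβ0 : β ≠ 0 := by
    intro h
    rw [h, zero_pow (by norm_num : (2 : ℕ) ≠ 0)] at hβ
    exact hb0 hβ.symm
  set ω : K := τ β * β⁻¹ with hω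
  have hτβ : τ β = ω * β := by rw [hω, inv_mul_cancel_right₀ hβ0]
  have hω2 : ω ^ 2 = -1 := by
    rw [hω, mul_pow, ← map_pow, hβ, inv_pow, hβ, hτb]
    field_simp
  have hω0 : ω ≠ 0 := by
    intro h
    rw [h] at hω2
    norm_num at hω2
  have hββ : (τ ^ 2) β = β := tau_pow_ord τ hord β
  have hτω : τ ω * ω = 1 := by
    have h3 : (τ ^ 2) β = τ ω * ω * β := by
      have h4 : (τ ^ 2) β = τ ((τ ^ 1) β) := pow_apply_succ τ 1 β
      rw [h4, pow_one, hτβ, map_mul, hτβ]; ring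
    rw [hββ] at h3
    rcases mul_left_eq_self₀.mp h3.symm with h | h
    · exact h
    · exact absurd h hβ0
  refine ⟨ω, hω2, ?_⟩
  have h5 : (-ω) * ω = 1 := by
    rw [neg_mul, ← pow_two, hω2]; norm_num
  exact mul_right_cancel₀ hω0 (hτω.trans h5.symm)

/-- every polynomial of odd degree has a monic irreducible factor of odd degree -/
lemma odd_factor {F : Type*} [Field F] :
    ∀ (N : ℕ) (f : F[X]), f.natDegree = N → Odd f.natDegree →
      ∃ g : F[X], Irreducible g ∧ g.Monic ∧ Odd g.natDegree ∧ g ∣ f := by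
  intro N
  induction N using Nat.strong_induction_on with
  | _ N ih =>
    intro f hN hodd
    have hf0 : f ≠ 0 := by
      intro h
      rw [h, natDegree_zero, Nat.odd_iff] at hodd
      omega
    have hlc : f.leadingCoeff ≠ 0 := leadingCoeff_ne_zero.mpr hf0
    by_cases hirr : Irreducible f
    · have hu : IsUnit (C f.leadingCoeff⁻¹) :=
        isUnit_C.mpr (isUnit_iff_ne_zero.mpr (inv_ne_zero hlc))
      refine ⟨f * C f.leadingCoeff⁻¹,
        (associated_mul_unit_right f _ hu).irreducible hirr,
        monic_mul_leadingCoeff_inv hf0, ?_, ?_⟩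
      · rw [natDegree_mul_C (inv_ne_zero hlc)]
        exact hodd
      · exact ⟨C f.leadingCoeff,
          by rw [mul_assoc, ← C_mul, inv_mul_cancel₀ hlc, C_1, mul_one]⟩
    · have hnd0 : f.natDegree ≠ 0 := by
        intro h
        rw [h, Nat.odd_iff] at hodd
        omega
      have hfu : ¬IsUnit f := not_isUnit_of_natDegree_pos f (Nat.pos_of_ne_zero hnd0)
      rw [irreducible_iff] at hirr
      push_neg at hirr
      obtain ⟨a, b, hab, hua, hub⟩ := hirr hfu
      have ha0 : a ≠ 0 := by rintro rfl; rw [zero_mul] at hab; exact hf0 hab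
      have hb0 : b ≠ 0 := by rintro rfl; rw [mul_zero] at hab; exact hf0 hab
      have hndunit : ∀ c : F[X], c ≠ 0 → ¬IsUnit c → c.natDegree ≠ 0 := by
        intro c hc0 hcu h
        obtain ⟨u, huc⟩ := natDegree_eq_zero.mp h
        have hu0 : u ≠ 0 := by rintro rfl; rw [map_zero] at huc; exact hc0 huc.symm
        exact hcu (huc ▸ isUnit_C.mpr (isUnit_iff_ne_zero.mpr hu0))
      have hda : a.natDegree ≠ 0 := hndunit a ha0 hua
      have hdb : b.natDegree ≠ 0 := hndunit b hb0 hub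
      have hsum : f.natDegree = a.natDegree + b.natDegree := by
        rw [hab, natDegree_mul ha0 hb0]
      have hor : Odd a.natDegree ∨ Odd b.natDegree := by
        by_contra hcon
        push_neg at hcon
        obtain ⟨h1, h2⟩ := hcon
        rw [Nat.not_odd_iff_even] at h1 h2
        rw [hsum] at hodd
        exact (Nat.not_odd_iff_even.mpr (h1.add h2)) hodd
      rcases hor with h | h
      · obtain ⟨g, hg1, hg2, hg3, hg4⟩ := ih a.natDegree (by omega) a rfl h
        exact ⟨g, hg1, hg2, hg3, hg4.trans ⟨b, hab⟩⟩
      · obtain ⟨g, hg1, hg2, hg3, hg4⟩ := ih b.natDegree (by omega) b rfl h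
        exact ⟨g, hg1, hg2, hg3, hg4.trans ⟨a, by rw [hab, mul_comm]⟩⟩

end ArtinSchreierAux

open ArtinSchreierAux IntermediateField

/-- A field F is real closed: -1 is not a square, every element or its negative is a
square, and every odd-degree polynomial has a root. -/
def IsRealClosedField (F : Type*) [Field F] : Prop :=
  (¬ IsSquare (-1 : F)) ∧ (∀ x : F, IsSquare x ∨ IsSquare (-x)) ∧
    ∀ f : Polynomial F, Odd f.natDegree → ∃ x : F, f.eval x = 0

set_option maxHeartbeats 2000000 in
set_option synthInstance.maxHeartbeats 400000 in
/-- Artin–Schreier: Let K be a separably closed field admitting a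
nontrivial automorphism of finite order whose fixed field F satisfies 1 < [K : F] < ∞.
Then char K = 0, F is real closed, K = F(i) with i² = -1, and [K : F] = 2. -/
theorem artin_schreier
    (K : Type*) [Field K] [IsSepClosed K]
    (σ : K ≃+* K) (hσ : σ ≠ RingEquiv.refl K) (hfin : IsOfFinOrder σ)
    (F : Subfield K) (hF : ∀ x : K, x ∈ F ↔ σ x = x)
    [FiniteDimensional F K] (hdeg : 1 < Module.finrank F K) :
    ringChar K = 0 ∧ IsRealClosedField F ∧
      (∃ i : K, i ^ 2 = -1 ∧ ∀ x : K, ∃ a b : F, x = (a : K) + (b : K) * i) ∧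
      Module.finrank F K = 2 := by
  classical
  set n := orderOf σ with hn
  have hn0 : n ≠ 0 := hfin.orderOf_pos.ne'
  have hn1 : n ≠ 1 := by
    rw [hn, Ne, orderOf_eq_one_iff]
    exact hσ
  -- any prime dividing n is not the characteristic
  have hchardvd : ∀ q : ℕ, q.Prime → q ∣ n → ((q : ℕ) : K) ≠ 0 := by
    intro q hqp hqd hq0
    have hτ : orderOf (σ ^ (n / q)) = q := orderOf_pow_orderOf_div hn0 hqd
    have hch : CharP K q := by
      have h1 : ringChar K ∣ q := ringChar.dvd hq0
      have h2 : ringChar K = q :=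
        ((Nat.dvd_prime hqp).mp h1).resolve_left (CharP.ringChar_ne_one)
      rw [← h2]
      exact ringChar.charP K
    refine char_case hqp hch (σ ^ (n / q)) hτ ?_
    intro a
    set P : K[X] := X ^ q - X - C a with hP
    have hder : derivative P = -1 := by
      rw [hP, derivative_sub, derivative_sub, derivative_X_pow, derivative_X, derivative_C]
      rw [hq0]
      simp
    have hsep : P.Separable := by
      rw [separable_def, hder]
      exact ⟨0, -1, by ring⟩
    have h3 : ((X : K[X]) ^ q - X).natDegree = q := by
      rw [Polynomial.natDegree_sub_eq_left_of_natDegree_lt, natDegree_X_pow]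
      rw [natDegree_X_pow, natDegree_X]
      exact hqp.one_lt
    have hnd : P.natDegree = q := by
      rw [hP, Polynomial.natDegree_sub_eq_left_of_natDegree_lt, h3]
      rw [h3, natDegree_C]
      exact hqp.pos
    have hdegP : P.degree ≠ 0 := by
      intro h0
      have h4 : P.natDegree = 0 := natDegree_eq_zero_iff_degree_le_zero.mpr (le_of_eq h0)
      rw [hnd] at h4
      exact hqp.ne_zero h4
    obtain ⟨x, hx⟩ := IsSepClosed.exists_root P hdegP hsep
    refine ⟨x, ?_⟩
    rw [hP] at hx
    simp only [Polynomial.IsRoot, eval_sub, eval_pow, eval_X, eval_C] at hx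
    linear_combination hx
  have hprime2 : ∀ q : ℕ, q.Prime → q ∣ n → q = 2 := by
    intro q hqp hqd
    by_contra hne
    exact odd_case hqp hne (hchardvd q hqp hqd) (σ ^ (n / q)) (orderOf_pow_orderOf_div hn0 hqd)
  obtain ⟨q0, hq0p, hq0d⟩ := Nat.exists_prime_and_dvd hn1
  have h2n : 2 ∣ n := by rw [← hprime2 q0 hq0p hq0d]; exact hq0d
  have h2K : (2 : K) ≠ 0 := by
    have := hchardvd 2 Nat.prime_two h2n
    push_cast at this
    exact this
  have h4n : ¬ (4 ∣ n) := by
    intro h4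
    set τ4 := σ ^ (n / 4) with hτ4def
    have hτ4 : orderOf τ4 = 4 := orderOf_pow_orderOf_div hn0 h4
    have hτ2 : orderOf (τ4 ^ 2) = 2 := by
      rw [orderOf_pow_of_dvd two_ne_zero (by rw [hτ4]; norm_num), hτ4]
    obtain ⟨i, hi2, hti⟩ := two_case h2K (τ4 ^ 2) hτ2
    have hi0 : i ≠ 0 := by intro h; rw [h] at hi2; norm_num at hi2
    have hcase : τ4 i = i ∨ τ4 i = -i := by
      have h5 : (τ4 i) ^ 2 = -1 := by rw [← map_pow, hi2, map_neg, map_one]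
      have h6 : (τ4 i - i) * (τ4 i + i) = 0 := by
        have h7 : (τ4 i) ^ 2 - i ^ 2 = 0 := by rw [h5, hi2]; ring
        linear_combination h7
      rcases mul_eq_zero.mp h6 with h | h
      · left; linear_combination h
      · right; linear_combination h
    have h7 : (τ4 ^ 2) i = i := by
      have h8 : (τ4 ^ 2) i = τ4 ((τ4 ^ 1) i) := pow_apply_succ τ4 1 i
      rw [pow_one] at h8
      rcases hcase with h | h
      · rw [h8, h, h]
      · rw [h8, h, map_neg, h, neg_neg]
    rw [hti] at h7
    have h9 : (2 : K) * i = 0 := by linear_combination -h7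
    rcases mul_eq_zero.mp h9 with h | h
    · exact h2K h
    · exact hi0 h
  have hn2 : n = 2 := by
    obtain ⟨m, hm⟩ := h2n
    by_contra hne
    have hm1 : m ≠ 1 := by intro h; rw [h, mul_one] at hm; exact hne hm
    obtain ⟨r, hr, hrd⟩ := Nat.exists_prime_and_dvd hm1
    have hrn : r ∣ n := hm ▸ hrd.mul_left 2
    have hr2 : r = 2 := hprime2 r hr hrn
    rw [hr2] at hrd
    obtain ⟨s, hs⟩ := hrd
    exact h4n ⟨s, by rw [hm, hs]; ring⟩
  have hord2 : orderOf σ = 2 := by rw [← hn]; exact hn2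
  obtain ⟨i, hi2, hsi⟩ := two_case h2K σ hord2
  have hi0 : i ≠ 0 := by intro h; rw [h] at hi2; norm_num at hi2
  have hii : i ≠ -i := by
    intro h
    have h9 : (2 : K) * i = 0 := by linear_combination h
    rcases mul_eq_zero.mp h9 with h' | h'
    · exact h2K h'
    · exact hi0 h'
  have hσσ : ∀ x : K, σ (σ x) = x := by
    intro x
    have h1 : (σ ^ 2) x = x := tau_pow_ord σ hord2 x
    have h2 : (σ ^ 2) x = σ ((σ ^ 1) x) := pow_apply_succ σ 1 x
    rw [pow_one] at h2
    rw [h2] at h1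
    exact h1
  have hFmem : ∀ x : K, σ x = x → x ∈ F := fun x h => (hF x).mpr h
  have hFfix : ∀ a : F, σ (a : K) = (a : K) := fun a => (hF _).mp a.2
  -- decomposition K = F + F i
  have hdecomp : ∀ x : K, ∃ a b : F, x = (a : K) + (b : K) * i := by
    intro x
    have ha : σ ((x + σ x) / 2) = (x + σ x) / 2 := by
      rw [map_div₀, map_add, hσσ, map_ofNat]
      ring_nf
    have hb : σ ((x - σ x) / (2 * i)) = (x - σ x) / (2 * i) := by
      rw [map_div₀, map_sub, hσσ, map_mul, map_ofNat, hsi]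
      rw [mul_neg, div_neg, ← neg_div, neg_sub]
    refine ⟨⟨_, hFmem _ ha⟩, ⟨_, hFmem _ hb⟩, ?_⟩
    show x = (x + σ x) / 2 + (x - σ x) / (2 * i) * i
    field_simp
    ring
  -- finrank = 2
  have hle : Module.finrank F K ≤ 2 := by
    let f : (F × F) →ₗ[F] K :=
      { toFun := fun p => (p.1 : K) + (p.2 : K) * i
        map_add' := by
          intro p q
          show ((p.1 + q.1 : F) : K) + ((p.2 + q.2 : F) : K) * i
              = ((p.1 : K) + (p.2 : K) * i) + ((q.1 : K) + (q.2 : K) * i)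
          push_cast
          ring
        map_smul' := by
          intro c p
          show ((c * p.1 : F) : K) + ((c * p.2 : F) : K) * i
              = (c : K) * ((p.1 : K) + (p.2 : K) * i)
          push_cast
          ring }
    have hsurj : Function.Surjective f := by
      intro x
      obtain ⟨a, b, hab⟩ := hdecomp x
      exact ⟨(a, b), hab.symm⟩
    have h1 := LinearMap.finrank_range_le f
    rw [LinearMap.range_eq_top.mpr hsurj, finrank_top] at h1
    calc Module.finrank F K ≤ Module.finrank F (F × F) := h1
      _ = 2 := by rw [Module.finrank_prod, Module.finrank_self]
  have hfr : Module.finrank F K = 2 := le_antisymm hle hdeg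
  -- -1 is not a square in F
  have hnotsq : ¬ IsSquare (-1 : F) := by
    rintro ⟨r, hr⟩
    have hrK : (r : K) * (r : K) = -1 := by
      have h0 := congrArg (fun z : F => (z : K)) hr
      push_cast at h0
      linear_combination -h0
    have hcase : (r : K) = i ∨ (r : K) = -i := by
      have h6 : ((r : K) - i) * ((r : K) + i) = 0 := by
        have h7 : (r : K) * (r : K) - i ^ 2 = 0 := by rw [hrK, hi2]; ring
        linear_combination h7
      rcases mul_eq_zero.mp h6 with h | h
      · left; linear_combination h
      · right; linear_combination h
    rcases hcase with h | h
    · have h9 := hFfix r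
      rw [h, hsi] at h9
      exact hii h9.symm
    · have h9 := hFfix r
      rw [h, map_neg, hsi, neg_neg] at h9
      exact hii h9
  -- characteristic zero
  have hchar0 : ringChar K = 0 := by
    rcases CharP.char_is_prime_or_zero K (ringChar K) with hp | h0
    · exfalso
      haveI : Fact (ringChar K).Prime := ⟨hp⟩
      haveI hKp : CharP K (ringChar K) := ringChar.charP K
      haveI hFp : CharP F (ringChar K) :=
        RingHom.charP (algebraMap F K) (RingHom.injective _) (ringChar K)
      obtain ⟨A0, B0, hAB0⟩ := ZMod.sq_add_sq (ringChar K) (-1 : ZMod (ringChar K))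
      set ν : ZMod (ringChar K) →+* F := ZMod.castHom (dvd_refl (ringChar K)) F with hν
      set A : F := ν A0 with hA
      set B : F := ν B0 with hB
      have hAB : A ^ 2 + B ^ 2 = -1 := by
        have h1 := congrArg ν hAB0
        rw [map_add, map_pow, map_pow, map_neg, map_one] at h1
        exact h1
      have hABK : (A : K) ^ 2 + (B : K) ^ 2 = -1 := by
        have h1 := congrArg (fun t : F => (t : K)) hAB
        push_cast at h1
        exact_mod_cast h1
      set z : K := (A : K) + (B : K) * i with hz
      have hσz : σ z = (A : K) - (B : K) * i := by
        rw [hz, map_add, map_mul, hFfix, hFfix, hsi]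
        ring
      have hzz : z * σ z = -1 := by
        rw [hz, hσz]
        calc ((A : K) + (B : K) * i) * ((A : K) - (B : K) * i)
            = (A : K) ^ 2 - (B : K) ^ 2 * i ^ 2 := by ring
          _ = (A : K) ^ 2 + (B : K) ^ 2 := by rw [hi2]; ring
          _ = -1 := hABK
      have hz0 : z ≠ 0 := by
        intro h
        rw [h, zero_mul] at hzz
        norm_num at hzz
      obtain ⟨w, hw⟩ := pow_root (K := K) (q := 2) (by push_cast; exact h2K) z
      have hu : σ (w * σ w) = w * σ w := by rw [map_mul, hσσ]; ring
      have hu2 : (w * σ w) ^ 2 = -1 := by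
        calc (w * σ w) ^ 2 = w ^ 2 * σ (w ^ 2) := by rw [mul_pow, map_pow]
          _ = z * σ z := by rw [hw]
          _ = -1 := hzz
      apply hnotsq
      refine ⟨⟨w * σ w, hFmem _ hu⟩, Subtype.ext ?_⟩
      push_cast
      linear_combination -hu2
    · exact h0
  haveI : CharP K 0 := by rw [← hchar0]; exact ringChar.charP K
  haveI : CharZero K := CharP.charP_to_charZero K
  haveI : CharZero F := by
    refine ⟨fun a b h => ?_⟩
    have h1 := congrArg (fun t : F => (t : K)) h
    push_cast at h1
    exact_mod_cast h1
  -- every element or its negative is a square in F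
  have hsqor : ∀ x : F, IsSquare x ∨ IsSquare (-x) := by
    intro x
    obtain ⟨y, hy⟩ := pow_root (K := K) (q := 2) (by push_cast; exact h2K) (x : K)
    have hcase : σ y = y ∨ σ y = -y := by
      have h5 : (σ y) ^ 2 = y ^ 2 := by
        calc (σ y) ^ 2 = σ (y ^ 2) := (map_pow σ y 2).symm
          _ = (x : K) := by rw [hy, hFfix]
          _ = y ^ 2 := hy.symm
      have h6 : (σ y - y) * (σ y + y) = 0 := by linear_combination h5
      rcases mul_eq_zero.mp h6 with h | h
      · left; linear_combination h
      · right; linear_combination h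
    rcases hcase with h | h
    · left
      refine ⟨⟨y, hFmem _ h⟩, Subtype.ext ?_⟩
      push_cast
      linear_combination -hy
    · right
      have hv : σ (i * y) = i * y := by rw [map_mul, hsi, h]; ring
      refine ⟨⟨i * y, hFmem _ hv⟩, Subtype.ext ?_⟩
      push_cast
      linear_combination (-(y ^ 2) : K) * hi2 + hy
  -- odd degree polynomials have roots
  have hoddpoly : ∀ f : Polynomial F, Odd f.natDegree → ∃ x : F, f.eval x = 0 := by
    intro f hodd
    obtain ⟨g, hgi, hgm, hgodd, hgdvd⟩ := odd_factor f.natDegree f rfl hodd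
    have hgsep : (g.map (algebraMap F K)).Separable := (hgi.separable).map
    have hgdeg : (g.map (algebraMap F K)).degree ≠ 0 := by
      rw [degree_map]
      intro h0
      have h1 : g.natDegree = 0 := natDegree_eq_zero_iff_degree_le_zero.mpr (le_of_eq h0)
      rw [h1, Nat.odd_iff] at hgodd
      omega
    obtain ⟨α, hα⟩ := IsSepClosed.exists_root _ hgdeg hgsep
    have haev : Polynomial.aeval α g = 0 := by rwa [aeval_def, ← eval_map]
    have hint : IsIntegral F α := ⟨g, hgm, haev⟩
    have hmin : minpoly F α = g := (minpoly.eq_of_irreducible_of_monic hgi haev hgm).symm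
    have hdvd2 : g.natDegree ∣ 2 := by
      refine ⟨Module.finrank F⟮α⟯ K, ?_⟩
      rw [← hfr, ← Module.finrank_mul_finrank F F⟮α⟯ K,
        IntermediateField.adjoin.finrank hint, hmin]
    have hg1 : g.natDegree = 1 := by
      rcases (Nat.dvd_prime Nat.prime_two).mp hdvd2 with h | h
      · exact h
      · exfalso; rw [h, Nat.odd_iff] at hgodd; omega
    obtain ⟨c, hc⟩ : ∃ c, g = X + C c := ⟨g.coeff 0, hgm.eq_X_add_C hg1⟩
    refine ⟨-c, ?_⟩
    obtain ⟨h, hh⟩ := hgdvd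
    rw [hh, eval_mul]
    have h1 : g.eval (-c) = 0 := by rw [hc, eval_add, eval_X, eval_C]; ring
    rw [h1, zero_mul]
  exact ⟨hchar0, ⟨hnotsq, hsqor, hoddpoly⟩, ⟨i, hi2, hdecomp⟩, hfr⟩
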